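/- The inclusion F(ℝ₊ⁿ) ⊆ K holds if and only if β ≥ 1, where K = {(x,z) ∈ ℝ₊ⁿ × ℝ : z − z₀ ≤ (γ ∏_{i=1}^n xᵢ^{aᵢ})^{1/β}}. Equivalently: for every x ∈ ℝ₊ⁿ with ℓ ≤ f(x) ≤ u one has f(x) − z₀ ≤ (γ f(x))^{1/β}, if and only if β ≥ 1. -/

import Mathlib

open Real Finset

/-- `F(ℝ₊ⁿ) ⊆ K` if and only if `β ≥ 1`. -/
theorem F_subset_K_iff (n : ℕ) (hn : 2 ≤ n) (a : Fin n → ℝ) (ha : ∀ i, 0 < a i)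
    (ℓ u : ℝ) (hℓ : 0 < ℓ) (hℓu : ℓ < u)
    (β z₀ γ : ℝ) (hβ : β = ∑ i, a i)
    (hz₀ : z₀ = (u ^ (1 / β) * ℓ - ℓ ^ (1 / β) * u) / (u ^ (1 / β) - ℓ ^ (1 / β)))
    (hγ : γ = ((u - ℓ) / (u ^ (1 / β) - ℓ ^ (1 / β))) ^ β) :
    {xz : (Fin n → ℝ) × ℝ | (∀ k, 0 ≤ xz.1 k) ∧
        ℓ ≤ ∏ i, xz.1 i ^ a i ∧ (∏ i, xz.1 i ^ a i) ≤ u ∧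
        xz.2 = ∏ i, xz.1 i ^ a i} ⊆
      {xz : (Fin n → ℝ) × ℝ | (∀ k, 0 ≤ xz.1 k) ∧
        xz.2 - z₀ ≤ (γ * ∏ i, xz.1 i ^ a i) ^ (1 / β)}
    ↔ 1 ≤ β := by
  have hβpos : 0 < β := by
    rw [hβ]
    exact Finset.sum_pos (fun i _ => ha i) ⟨⟨0, by omega⟩, Finset.mem_univ _⟩
  have hβne : β ≠ 0 := ne_of_gt hβpos
  have hp : 0 < 1 / β := by positivity
  have hlu_rpow : ℓ ^ (1 / β) < u ^ (1 / β) := Real.rpow_lt_rpow hℓ.le hℓu hp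
  have hD : (0 : ℝ) < u ^ (1 / β) - ℓ ^ (1 / β) := by linarith
  set c : ℝ := (u - ℓ) / (u ^ (1 / β) - ℓ ^ (1 / β)) with hc_def
  have hc : 0 < c := div_pos (by linarith) hD
  have hγc : ∀ z : ℝ, 0 < z → (γ * z) ^ (1 / β) = c * z ^ (1 / β) := by
    intro z hz
    rw [hγ, Real.mul_rpow (Real.rpow_nonneg hc.le β) hz.le,
      ← Real.rpow_mul hc.le, mul_one_div, div_self hβne, Real.rpow_one]
  have hℓeq : c * ℓ ^ (1 / β) + z₀ = ℓ := by
    rw [hc_def, hz₀]; field_simp; ring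
  have hueq : c * u ^ (1 / β) + z₀ = u := by
    rw [hc_def, hz₀]; field_simp; ring
  constructor
  · -- inclusion → 1 ≤ β, by contradiction
    intro hsub
    by_contra hβ1
    push_neg at hβ1
    set z : ℝ := (ℓ + u) / 2 with hzdef
    have hzpos : 0 < z := by rw [hzdef]; linarith
    have hxmem : (fun _ : Fin n => z ^ (1 / β), z) ∈
        {xz : (Fin n → ℝ) × ℝ | (∀ k, 0 ≤ xz.1 k) ∧
          ℓ ≤ ∏ i, xz.1 i ^ a i ∧ (∏ i, xz.1 i ^ a i) ≤ u ∧
          xz.2 = ∏ i, xz.1 i ^ a i} := by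
      have hprod : (∏ i, (z ^ (1 / β)) ^ a i) = z := by
        have : ∀ i : Fin n, (z ^ (1 / β)) ^ a i = z ^ (1 / β * a i) := fun i => by
          rw [← Real.rpow_mul hzpos.le]
        simp_rw [this]
        rw [← Real.rpow_sum_of_pos hzpos, ← Finset.mul_sum, ← hβ, one_div,
          inv_mul_cancel₀ hβne, Real.rpow_one]
      refine ⟨fun k => (Real.rpow_nonneg hzpos.le _), ?_, ?_, hprod.symm⟩
      · rw [hprod]; simp only [hzdef]; linarith
      · rw [hprod]; simp only [hzdef]; linarith
    have hK := hsub hxmem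
    obtain ⟨-, hle⟩ := hK
    simp only at hle
    have hprod : (∏ i, (z ^ (1 / β)) ^ a i) = z := by
      have : ∀ i : Fin n, (z ^ (1 / β)) ^ a i = z ^ (1 / β * a i) := fun i => by
        rw [← Real.rpow_mul hzpos.le]
      simp_rw [this]
      rw [← Real.rpow_sum_of_pos hzpos, ← Finset.mul_sum, ← hβ, one_div,
        inv_mul_cancel₀ hβne, Real.rpow_one]
    rw [hprod, hγc z hzpos] at hle
    -- strict convexity of t ↦ t^(1/β) since 1/β > 1
    have hconv : z ^ (1 / β) < (1/2 : ℝ) * ℓ ^ (1 / β) + (1/2 : ℝ) * u ^ (1 / β) := by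
      have h1 : (1 : ℝ) < 1 / β := by
        rw [lt_div_iff₀ hβpos]; linarith
      have h := (strictConvexOn_rpow h1).2 (Set.mem_Ici.2 hℓ.le) (Set.mem_Ici.2 (by linarith : (0:ℝ) ≤ u))
        (ne_of_lt hℓu) (by norm_num : (0:ℝ) < 1/2) (by norm_num : (0:ℝ) < 1/2) (by norm_num)
      rw [hzdef, show (ℓ + u)/2 = (1/2:ℝ)*ℓ + (1/2:ℝ)*u by ring]
      simpa [smul_eq_mul] using h
    have : c * z ^ (1 / β) + z₀ < z := by
      have := mul_lt_mul_of_pos_left hconv hc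
      have h2 : c * ((1/2 : ℝ) * ℓ ^ (1 / β) + (1/2 : ℝ) * u ^ (1 / β)) + z₀
          = (1/2 : ℝ) * (c * ℓ ^ (1 / β) + z₀) + (1/2 : ℝ) * (c * u ^ (1 / β) + z₀) := by ring
      calc c * z ^ (1 / β) + z₀
          < c * ((1/2 : ℝ) * ℓ ^ (1 / β) + (1/2 : ℝ) * u ^ (1 / β)) + z₀ := by linarith
        _ = (1/2 : ℝ) * ℓ + (1/2 : ℝ) * u := by rw [h2, hℓeq, hueq]
        _ = z := by rw [hzdef]; ring
    linarith
  · -- 1 ≤ β → inclusion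
    intro hβ1 xz hmem
    obtain ⟨hx, hℓz, hzu, hz⟩ := hmem
    set z : ℝ := ∏ i, xz.1 i ^ a i with hzdef
    have hzpos : 0 < z := lt_of_lt_of_le hℓ hℓz
    refine ⟨hx, ?_⟩
    rw [show (γ * ∏ i, xz.1 i ^ a i) = γ * z from rfl, hγc z hzpos, hz]
    -- write z as convex combination of ℓ and u
    set lam : ℝ := (u - z) / (u - ℓ) with hlam
    set mu : ℝ := (z - ℓ) / (u - ℓ) with hmu
    have hul : (0:ℝ) < u - ℓ := by linarith
    have hlam0 : 0 ≤ lam := div_nonneg (by linarith) hul.le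
    have hmu0 : 0 ≤ mu := div_nonneg (by linarith) hul.le
    have hlm1 : lam + mu = 1 := by rw [hlam, hmu]; field_simp; ring
    have hcomb : lam * ℓ + mu * u = z := by rw [hlam, hmu]; field_simp; ring
    have hconc : lam * ℓ ^ (1 / β) + mu * u ^ (1 / β) ≤ z ^ (1 / β) := by
      have hp1 : 1 / β ≤ 1 := by
        rw [div_le_one hβpos]; exact hβ1
      have := (Real.concaveOn_rpow hp.le hp1).2 (Set.mem_Ici.2 hℓ.le)
        (Set.mem_Ici.2 (by linarith : (0:ℝ) ≤ u)) hlam0 hmu0 hlm1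
      simpa [smul_eq_mul, hcomb] using this
    have := mul_le_mul_of_nonneg_left hconc hc.le
    have h2 : c * (lam * ℓ ^ (1 / β) + mu * u ^ (1 / β)) + z₀
        = lam * (c * ℓ ^ (1 / β) + z₀) + mu * (c * u ^ (1 / β) + z₀) := by
      have e : lam * z₀ + mu * z₀ = z₀ := by rw [← add_mul, hlm1, one_mul]
      linear_combination -e
    have h3 : z ≤ c * z ^ (1 / β) + z₀ := by
      calc z = lam * ℓ + mu * u := hcomb.symm
        _ = lam * (c * ℓ ^ (1 / β) + z₀) + mu * (c * u ^ (1 / β) + z₀) := by rw [hℓeq, hueq]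
        _ = c * (lam * ℓ ^ (1 / β) + mu * u ^ (1 / β)) + z₀ := h2.symm
        _ ≤ c * z ^ (1 / β) + z₀ := by linarith
    linarith
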